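/- (Pointwise version of Lemma 3's multiplicity splitting) For any nonnegative integers v, n, k with k ≥ n, one has min{v, n} ≤ (k/(k+1))·min{v·1_{v≤k}, n} + (n/(k+1))·v, where 1_{v≤k} is 1 if v ≤ k and 0 otherwise. -/

import Mathlib

/-- Pointwise multiplicity splitting of Lemma 3: for nonnegative integers `v, n, k` with
`k ≥ n ≥ 1`, one has `min v n ≤ (k/(k+1))·min (v·1_{v≤k}) n + (n/(k+1))·v` over `ℚ`. -/
theorem multiplicity_splitting (v n k : ℕ) (hn : 1 ≤ n) (hk : n ≤ k) :
    (min v n : ℚ) ≤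
      (k : ℚ) / (k + 1) * (min (if v ≤ k then v else 0) n : ℕ) +
        (n : ℚ) / (k + 1) * v := by
  have hK : (0:ℚ) < (k:ℚ) + 1 := by positivity
  rw [div_mul_eq_mul_div, div_mul_eq_mul_div, ← add_div, le_div_iff₀ hK]
  push_cast
  by_cases hv : v ≤ k
  · simp only [if_pos hv]
    have h1 : (min v n : ℚ) ≤ (n:ℚ) * v := by
      rcases Nat.eq_zero_or_pos v with h | h
      · simp [h]
      · calc (min v n : ℚ) ≤ (n:ℚ) := by exact_mod_cast min_le_right v n
          _ ≤ (n:ℚ) * v := by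
              nlinarith [Nat.one_le_cast (α := ℚ) |>.mpr h]
    nlinarith [Nat.cast_nonneg (α := ℚ) (min v n), Nat.cast_nonneg (α := ℚ) k]
  · simp only [if_neg hv]
    push_neg at hv
    have hnv : n ≤ v := le_trans hk (le_of_lt hv)
    have hmin : (v:ℚ) ⊓ n = n := min_eq_right (by exact_mod_cast hnv)
    rw [hmin]
    have hkv : (k:ℚ) + 1 ≤ (v:ℚ) := by exact_mod_cast hv
    have hn' : (0:ℚ) ≤ (n:ℚ) := Nat.cast_nonneg n
    rw [min_eq_left hn']
    nlinarith
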